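/- Let P : ℝ^{n1×n2×n3} → ℝ^{n1×n2×n3} be an orthogonal projection with respect to the Frobenius inner product, let R ∈ ℝ^{n1×n2×n3} be nonzero with P(R) = R, and let M₁ = U(:,1,:) * (S(1,1,:)/‖S(1,1,:)‖_F) * V(:,1,:)^T be the normalized leading rank-one tensor of an ordered t-SVD R = U * S * V^T of R. Then inf_{θ∈ℝ} ‖R − θ·P(M₁)‖_F² ≤ (1 − 1/min(n1,n2))·‖R‖_F². -/

import Mathlib

open scoped BigOperators Matrix Kronecker ComplexConjugate
open Complex

/-- A third-order tensor of size `n1 × n2 × n3` with entries in `R`. -/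
abbrev T3 (n1 n2 n3 : ℕ) (R : Type*) : Type _ := Fin n1 → Fin n2 → Fin n3 → R

namespace T3

variable {n1 n2 n3 l : ℕ}

/-- The Frobenius inner product `⟨A,B⟩ = Σ_{i,j,k} A_{ijk} B_{ijk}`. -/
def tInner (A B : T3 n1 n2 n3 ℝ) : ℝ := ∑ i, ∑ j, ∑ k, A i j k * B i j k

/-- The Frobenius norm `‖A‖_F = √⟨A,A⟩`. -/
noncomputable def tNorm (A : T3 n1 n2 n3 ℝ) : ℝ := Real.sqrt (tInner A A)

/-- The `n × n` DFT matrix, `(F_n)_{ab} = ω^{ab}` (0-based), `ω = exp(-2πi/n)`. -/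
noncomputable def dftMatrix (n : ℕ) : Matrix (Fin n) (Fin n) ℂ :=
  fun a b => Complex.exp (-(2 * (Real.pi : ℂ) * Complex.I) / (n : ℂ)) ^ ((a : ℕ) * (b : ℕ))

/-- The `k`-th frontal slice `Â^{(k)}` of the DFT of `A` along the third dimension:
`Â(i,j,:) = F_{n3} · A(i,j,:)`. -/
noncomputable def hatSlice (A : T3 n1 n2 n3 ℝ) (k : Fin n3) : Matrix (Fin n1) (Fin n2) ℂ :=
  fun i j => ∑ m : Fin n3, dftMatrix n3 k m * (A i j m : ℂ)

/-- The block circulant matrix of `A`: the `(p,q)` block (0-based) is the frontal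
slice `A^{(p-q mod n3)}`. -/
def bcirc (A : T3 n1 n2 n3 ℝ) : Matrix (Fin n3 × Fin n1) (Fin n3 × Fin n2) ℝ :=
  fun p q => A p.2 q.2 (p.1 - q.1)

/-- The block diagonal matrix with diagonal blocks `Â^{(1)}, …, Â^{(n3)}`. -/
noncomputable def bdiag (A : T3 n1 n2 n3 ℝ) : Matrix (Fin n3 × Fin n1) (Fin n3 × Fin n2) ℂ :=
  fun p q => if p.1 = q.1 then hatSlice A p.1 p.2 q.2 else 0

/-- t-product: `(A*B)^{(k)} = Σ_q A^{(k-q mod n3)} B^{(q)}` (circular convolution of slices). -/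
def tprod (A : T3 n1 n2 n3 ℝ) (B : T3 n2 l n3 ℝ) : T3 n1 l n3 ℝ :=
  fun i j k => ∑ q : Fin n3, ∑ p : Fin n2, A i p (k - q) * B p j q

/-- Tensor transpose: `(Aᵀ)^{(k)} = (A^{(-k mod n3)})ᵀ`. -/
def tT (A : T3 n1 n2 n3 ℝ) : T3 n2 n1 n3 ℝ := fun j i k => A i j (-k)

/-- The identity tensor: first frontal slice the identity matrix, other slices zero. -/
def tI (q m : ℕ) : T3 q q m ℝ := fun i j k => if i = j ∧ (k : ℕ) = 0 then 1 else 0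

/-- An orthogonal tensor: `Qᵀ * Q = Q * Qᵀ = I`. -/
def TOrth {n m : ℕ} (Q : T3 n n m ℝ) : Prop :=
  tprod (tT Q) Q = tI n m ∧ tprod Q (tT Q) = tI n m

/-- A partially orthogonal tensor: `Qᵀ * Q = I`. -/
def PartOrth {n q m : ℕ} (Q : T3 n q m ℝ) : Prop := tprod (tT Q) Q = tI q m

/-- f-diagonal tensor: every frontal slice is a diagonal matrix. -/
def FDiag (S : T3 n1 n2 n3 ℝ) : Prop :=
  ∀ (i : Fin n1) (j : Fin n2) (k : Fin n3), (i : ℕ) ≠ (j : ℕ) → S i j k = 0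

/-- Every Fourier-domain frontal slice of `S` has real, nonnegative, nonincreasing
diagonal entries. -/
def OrderedDiag (S : T3 n1 n2 n3 ℝ) : Prop :=
  ∀ k : Fin n3,
    (∀ (i : Fin n1) (j : Fin n2), (i : ℕ) = (j : ℕ) →
      (hatSlice S k i j).im = 0 ∧ 0 ≤ (hatSlice S k i j).re) ∧
    (∀ (i i' : Fin n1) (j j' : Fin n2), (i : ℕ) = (j : ℕ) → (i' : ℕ) = (j' : ℕ) →
      (i : ℕ) ≤ (i' : ℕ) → (hatSlice S k i' j').re ≤ (hatSlice S k i j).re)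

/-- A t-SVD of `A`: `A = U * S * Vᵀ` with `U, V` orthogonal and `S` f-diagonal. -/
def IsTSVD (A : T3 n1 n2 n3 ℝ) (U : T3 n1 n1 n3 ℝ) (S : T3 n1 n2 n3 ℝ)
    (V : T3 n2 n2 n3 ℝ) : Prop :=
  TOrth U ∧ TOrth V ∧ FDiag S ∧ A = tprod (tprod U S) (tT V)

/-- An ordered t-SVD. -/
def IsOrderedTSVD (A : T3 n1 n2 n3 ℝ) (U : T3 n1 n1 n3 ℝ) (S : T3 n1 n2 n3 ℝ)
    (V : T3 n2 n2 n3 ℝ) : Prop :=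
  IsTSVD A U S V ∧ OrderedDiag S

/-- Lateral slice `U(:,i,:)` as an `n1 × 1 × n3` tensor. -/
def lat (U : T3 n1 n2 n3 ℝ) (i : Fin n2) : T3 n1 1 n3 ℝ := fun a _ k => U a i k

/-- Tube `S(i,j,:)` as a `1 × 1 × n3` tensor. -/
def tube (S : T3 n1 n2 n3 ℝ) (i : Fin n1) (j : Fin n2) : T3 1 1 n3 ℝ := fun _ _ k => S i j k

/-- The rank-one term `U(:,i,:) * S(i,j,:) * V(:,j,:)ᵀ`. -/
def rankOne (U : T3 n1 n1 n3 ℝ) (S : T3 n1 n2 n3 ℝ) (V : T3 n2 n2 n3 ℝ)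
    (i : Fin n1) (j : Fin n2) : T3 n1 n2 n3 ℝ :=
  tprod (tprod (lat U i) (tube S i j)) (tT (lat V j))

/-- The normalized leading rank-one tensor
`M₁ = U(:,1,:) * (S(1,1,:)/‖S(1,1,:)‖_F) * V(:,1,:)ᵀ`. -/
noncomputable def leadM (hn1 : 0 < n1) (hn2 : 0 < n2) (U : T3 n1 n1 n3 ℝ)
    (S : T3 n1 n2 n3 ℝ) (V : T3 n2 n2 n3 ℝ) : T3 n1 n2 n3 ℝ :=
  tprod (tprod (lat U ⟨0, hn1⟩)
      (fun _ _ k => S ⟨0, hn1⟩ ⟨0, hn2⟩ k / tNorm (tube S ⟨0, hn1⟩ ⟨0, hn2⟩)))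
    (tT (lat V ⟨0, hn2⟩))

/-- `‖Y‖_{1,F}`: the maximal Euclidean norm of a column fiber of a frontal slice of `Ŷ`. -/
noncomputable def norm1F (Y : T3 n1 n2 n3 ℝ) : ℝ :=
  ⨆ p : Fin n2 × Fin n3, Real.sqrt (∑ i, ‖hatSlice Y p.2 i p.1‖ ^ 2)

/-- The tubal rank: the maximal rank of a frontal slice of the third-mode DFT. -/
noncomputable def tubalRank (X : T3 n1 n2 n3 ℝ) : ℕ :=
  Finset.univ.sup fun k : Fin n3 => (hatSlice X k).rank

end T3

open T3


-- ===== auxiliary lemmas =====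
noncomputable def w (n : ℕ) : ℂ := Complex.exp (-(2 * (Real.pi : ℂ) * Complex.I) / (n : ℂ))

lemma w_pow_n {n : ℕ} (hn : n ≠ 0) : w n ^ n = 1 := by
  rw [w, ← Complex.exp_nat_mul]
  have hc : (n : ℂ) ≠ 0 := Nat.cast_ne_zero.mpr hn
  have : (n : ℂ) * (-(2 * (Real.pi : ℂ) * Complex.I) / (n : ℂ)) = -(2 * (Real.pi : ℂ) * Complex.I) := by
    field_simp
  rw [this, Complex.exp_neg, Complex.exp_two_pi_mul_I, inv_one]

lemma abs_w {n : ℕ} : ‖w n‖ = 1 := by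
  have : -(2 * (Real.pi : ℂ) * Complex.I) / (n : ℂ) = ((-(2 * Real.pi) / n : ℝ) : ℂ) * Complex.I := by
    push_cast; ring
  rw [w, this, Complex.norm_exp_ofReal_mul_I]

lemma w_ne_zero {n : ℕ} : w n ≠ 0 := by
  intro h; have := abs_w (n := n); rw [h] at this; simp at this

lemma conj_w_pow {n : ℕ} (j : ℕ) : conj (w n ^ j) = (w n ^ j)⁻¹ := by
  rw [Complex.inv_eq_conj]
  simp [abs_w]

lemma w_pow_mod {n : ℕ} (hn : n ≠ 0) (a : ℕ) : w n ^ (a % n) = w n ^ a := by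
  conv_rhs => rw [← Nat.mod_add_div a n]
  rw [pow_add, pow_mul, w_pow_n hn, one_pow, mul_one]

lemma w_pow_congr {n : ℕ} (hn : n ≠ 0) {a b : ℕ} (h : a % n = b % n) : w n ^ a = w n ^ b := by
  rw [← w_pow_mod hn a, h, w_pow_mod hn b]

lemma w_prim {n : ℕ} (hn : n ≠ 0) : IsPrimitiveRoot (w n) n := by
  have h := (Complex.isPrimitiveRoot_exp n hn).inv
  have h2 : -(2 * (Real.pi : ℂ) * Complex.I) / (n : ℂ) = -(2 * (Real.pi : ℂ) * Complex.I / (n : ℂ)) := by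
    ring
  have h3 : w n = (Complex.exp (2 * (Real.pi : ℂ) * Complex.I / (n : ℂ)))⁻¹ := by
    rw [w, h2, Complex.exp_neg]
  rwa [h3]

lemma dft_orth {n : ℕ} (hn : n ≠ 0) (m m' : Fin n) :
    ∑ k : Fin n, conj (w n ^ ((k : ℕ) * (m : ℕ))) * w n ^ ((k : ℕ) * (m' : ℕ))
      = if m = m' then (n : ℂ) else 0 := by
  have hw0 : w n ≠ 0 := w_ne_zero
  have hterm : ∀ k : Fin n, conj (w n ^ ((k : ℕ) * (m : ℕ))) * w n ^ ((k : ℕ) * (m' : ℕ))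
      = (w n ^ (m' : ℕ) * (w n ^ (m : ℕ))⁻¹) ^ (k : ℕ) := by
    intro k
    rw [conj_w_pow,
      show (k : ℕ) * (m : ℕ) = (m : ℕ) * (k : ℕ) from Nat.mul_comm _ _,
      show (k : ℕ) * (m' : ℕ) = (m' : ℕ) * (k : ℕ) from Nat.mul_comm _ _,
      pow_mul, pow_mul, ← inv_pow, ← mul_pow, mul_comm ((w n ^ (m : ℕ))⁻¹)]
  simp only [hterm]
  by_cases h : m = m'
  · subst h
    simp [mul_inv_cancel₀ (pow_ne_zero _ hw0)]
  · have hz : w n ^ (m' : ℕ) * (w n ^ (m : ℕ))⁻¹ ≠ 1 := by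
      intro hc
      have : w n ^ ((m' : ℤ) - (m : ℤ)) = 1 := by
        rw [zpow_sub₀ hw0]
        rw [zpow_natCast, zpow_natCast, div_eq_mul_inv]; exact hc
      rw [(w_prim hn).zpow_eq_one_iff_dvd] at this
      rcases this with ⟨c, hc2⟩
      have h1 : (m' : ℤ) < n := by exact_mod_cast m'.isLt
      have h2 : (m : ℤ) < n := by exact_mod_cast m.isLt
      have h3 : (0 : ℤ) ≤ m := by positivity
      have h4 : (0 : ℤ) ≤ m' := by positivity
      have hne : (m' : ℤ) - m ≠ 0 := by
        intro hc3
        apply h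
        have hval : (m : ℕ) = (m' : ℕ) := by omega
        exact Fin.ext hval
      have hc3 : c ≠ 0 := by rintro rfl; simp at hc2; omega
      have hn1 : (1 : ℤ) ≤ n := by exact_mod_cast Nat.one_le_iff_ne_zero.mpr hn
      have : (1:ℤ) ≤ c ∨ c ≤ -1 := by omega
      rcases this with hc4 | hc4 <;> nlinarith [hc2]
    have hzn : (w n ^ (m' : ℕ) * (w n ^ (m : ℕ))⁻¹) ^ n = 1 := by
      rw [mul_pow, ← pow_mul, mul_comm ((m' : ℕ)) n, pow_mul, w_pow_n hn, one_pow, one_mul,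
        inv_pow, ← pow_mul, mul_comm ((m : ℕ)) n, pow_mul, w_pow_n hn, one_pow, inv_one]
    rw [if_neg h]
    rw [Fin.sum_univ_eq_sum_range (fun k => (w n ^ (m' : ℕ) * (w n ^ (m : ℕ))⁻¹) ^ k)]
    rw [geom_sum_eq hz, hzn, sub_self, zero_div]


open T3

section HatLemmas
variable {n1 n2 n3 l : ℕ}

lemma hat_apply (A : T3 n1 n2 n3 ℝ) (k : Fin n3) (i : Fin n1) (j : Fin n2) :
    hatSlice A k i j = ∑ m : Fin n3, w n3 ^ ((k : ℕ) * (m : ℕ)) * (A i j m : ℂ) := rfl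

lemma w_split [NeZero n3] (k q m : Fin n3) :
    w n3 ^ ((k : ℕ) * ((m + q : Fin n3) : ℕ))
      = w n3 ^ ((k : ℕ) * (m : ℕ)) * w n3 ^ ((k : ℕ) * (q : ℕ)) := by
  have hn : n3 ≠ 0 := NeZero.ne n3
  rw [← pow_add]
  apply w_pow_congr hn
  have h0 : ((m + q : Fin n3) : ℕ) ≡ (m : ℕ) + (q : ℕ) [MOD n3] := by
    rw [Fin.val_add]; exact Nat.mod_modEq _ _
  have := Nat.ModEq.mul_left (k : ℕ) h0
  rwa [Nat.mul_add] at this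

lemma w_neg [NeZero n3] (k m : Fin n3) :
    w n3 ^ ((k : ℕ) * ((-m : Fin n3) : ℕ)) = conj (w n3 ^ ((k : ℕ) * (m : ℕ))) := by
  have hn : n3 ≠ 0 := NeZero.ne n3
  rw [conj_w_pow]
  apply eq_inv_of_mul_eq_one_left
  rw [← pow_add]
  have h0 : ((-m : Fin n3) : ℕ) + (m : ℕ) ≡ 0 [MOD n3] := by
    have h1 : ((-m + m : Fin n3) : ℕ) = (((-m : Fin n3) : ℕ) + (m : ℕ)) % n3 := Fin.val_add _ _
    rw [neg_add_cancel] at h1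
    simp only [Fin.val_zero] at h1
    unfold Nat.ModEq
    rw [Nat.zero_mod, ← h1]
  have := Nat.ModEq.mul_left (k : ℕ) h0
  rw [Nat.mul_add] at this
  rw [w_pow_congr hn this]
  simp

lemma hat_tprod [NeZero n3] (A : T3 n1 n2 n3 ℝ) (B : T3 n2 l n3 ℝ) (k : Fin n3)
    (i : Fin n1) (j : Fin l) :
    hatSlice (tprod A B) k i j = ∑ p, hatSlice A k i p * hatSlice B k p j := by
  simp only [hat_apply]
  unfold T3.tprod
  push_cast
  simp only [Finset.mul_sum, Finset.sum_mul_sum]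
  rw [Finset.sum_comm]
  refine Eq.trans (Finset.sum_congr rfl fun q _ => Finset.sum_comm) ?_
  rw [Finset.sum_comm]
  refine Finset.sum_congr rfl fun p _ => ?_
  refine Finset.sum_congr rfl fun q _ => ?_
  rw [Finset.sum_mul]
  refine (Fintype.sum_equiv (Equiv.addRight q) _ _ fun m => ?_).symm
  simp only [Equiv.coe_addRight]
  rw [add_sub_cancel_right, w_split k q m]
  ring

lemma hat_tT [NeZero n3] (A : T3 n1 n2 n3 ℝ) (k : Fin n3) (j : Fin n2) (i : Fin n1) :
    hatSlice (tT A) k j i = conj (hatSlice A k i j) := by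
  simp only [hat_apply]
  unfold T3.tT
  rw [map_sum]
  refine Fintype.sum_equiv (Equiv.neg (Fin n3)) _ _ fun m => ?_
  simp only [Equiv.neg_apply, neg_neg]
  rw [map_mul, Complex.conj_ofReal, ← w_neg]
  congr 2
  simp

lemma hat_tI [NeZero n3] {n : ℕ} (k : Fin n3) (i j : Fin n) :
    hatSlice (tI n n3) k i j = if i = j then 1 else 0 := by
  rw [hat_apply]
  rw [Finset.sum_eq_single (0 : Fin n3)]
  · simp [T3.tI, apply_ite]
  · intro m _ hm
    have hv : ¬((m : ℕ) = 0) := by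
      intro h; exact hm (Fin.ext (by simpa using h))
    simp [T3.tI, hv]
  · simp

lemma hat_orth [NeZero n3] {n : ℕ} {Q : T3 n n n3 ℝ} (hQ : tprod (tT Q) Q = tI n n3)
    (k : Fin n3) (a b : Fin n) :
    ∑ p, conj (hatSlice Q k p a) * hatSlice Q k p b = if a = b then 1 else 0 := by
  have h : hatSlice (tprod (tT Q) Q) k a b = hatSlice (tI n n3) k a b := by rw [hQ]
  rw [hat_tprod, hat_tI] at h
  simp only [hat_tT] at h
  exact h

lemma parseval [NeZero n3] (A B : T3 n1 n2 n3 ℝ) :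
    ∑ k : Fin n3, ∑ i, ∑ j, conj (hatSlice A k i j) * hatSlice B k i j
      = (n3 : ℂ) * ((tInner A B : ℝ) : ℂ) := by
  have hn : n3 ≠ 0 := NeZero.ne n3
  simp only [hat_apply]
  have hterm : ∀ (k : Fin n3) (i : Fin n1) (j : Fin n2),
      conj (∑ m : Fin n3, w n3 ^ ((k : ℕ) * (m : ℕ)) * (A i j m : ℂ))
        * (∑ m : Fin n3, w n3 ^ ((k : ℕ) * (m : ℕ)) * (B i j m : ℂ))
      = ∑ m : Fin n3, ∑ m' : Fin n3, ((A i j m : ℂ) * (B i j m' : ℂ))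
          * (conj (w n3 ^ ((k : ℕ) * (m : ℕ))) * w n3 ^ ((k : ℕ) * (m' : ℕ))) := by
    intro k i j
    rw [map_sum, Finset.sum_mul_sum]
    refine Finset.sum_congr rfl fun m _ => Finset.sum_congr rfl fun m' _ => ?_
    rw [map_mul, Complex.conj_ofReal]
    ring
  simp only [hterm]
  -- now: Σ_k Σ_i Σ_j Σ_m Σ_m' ...  = n3 * tInner
  rw [Finset.sum_comm]
  refine Eq.trans (Finset.sum_congr rfl fun i _ => Finset.sum_comm) ?_
  -- Σ_i Σ_j Σ_k Σ_m Σ_m'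
  unfold T3.tInner
  push_cast
  rw [Finset.mul_sum]
  refine Finset.sum_congr rfl fun i _ => ?_
  rw [Finset.mul_sum]
  refine Finset.sum_congr rfl fun j _ => ?_
  -- Σ_k Σ_m Σ_m' (A m * B m') * (conj w^{km} w^{km'}) = n3 * Σ_m A m * B m
  rw [Finset.sum_comm]
  refine Eq.trans (Finset.sum_congr rfl fun m _ => Finset.sum_comm) ?_
  -- Σ_m Σ_m' Σ_k
  rw [Finset.mul_sum]
  refine Finset.sum_congr rfl fun m _ => ?_
  -- Σ_m' Σ_k (A m B m')*(conj w w) = n3 * (A m * B m)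
  have hcol : ∀ m' : Fin n3, ∑ k : Fin n3, ((A i j m : ℂ) * (B i j m' : ℂ))
        * (conj (w n3 ^ ((k : ℕ) * (m : ℕ))) * w n3 ^ ((k : ℕ) * (m' : ℕ)))
      = ((A i j m : ℂ) * (B i j m' : ℂ)) * (if m = m' then (n3 : ℂ) else 0) := by
    intro m'
    rw [← Finset.mul_sum, dft_orth hn]
  simp only [hcol]
  rw [Finset.sum_eq_single m]
  · rw [if_pos rfl]; ring
  · intro b _ hb
    rw [if_neg (fun h => hb h.symm), mul_zero]
  · intro hm; exact absurd (Finset.mem_univ m) hm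

lemma hat_tprod_mat [NeZero n3] (A : T3 n1 n2 n3 ℝ) (B : T3 n2 l n3 ℝ) (k : Fin n3) :
    hatSlice (tprod A B) k = hatSlice A k * hatSlice B k := by
  funext i j
  rw [hat_tprod, Matrix.mul_apply]

lemma hat_tT_mat [NeZero n3] (A : T3 n1 n2 n3 ℝ) (k : Fin n3) :
    hatSlice (tT A) k = (hatSlice A k)ᴴ := by
  funext j i
  rw [hat_tT, Matrix.conjTranspose_apply, Complex.star_def]

lemma hat_orth_mat [NeZero n3] {n : ℕ} {Q : T3 n n n3 ℝ} (hQ : tprod (tT Q) Q = tI n n3)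
    (k : Fin n3) : (hatSlice Q k)ᴴ * hatSlice Q k = 1 := by
  funext a b
  rw [Matrix.mul_apply]
  simp only [Matrix.conjTranspose_apply, Complex.star_def]
  rw [hat_orth hQ k a b, Matrix.one_apply]

lemma trace_conjT_mul {a b : ℕ} (X Y : Matrix (Fin a) (Fin b) ℂ) :
    Matrix.trace (Xᴴ * Y) = ∑ i, ∑ j, conj (X i j) * Y i j := by
  rw [Matrix.trace]
  simp only [Matrix.diag_apply, Matrix.mul_apply, Matrix.conjTranspose_apply,
    Complex.star_def]
  rw [Finset.sum_comm]

lemma frob_unitary {a b : ℕ} (U : Matrix (Fin a) (Fin a) ℂ) (V : Matrix (Fin b) (Fin b) ℂ)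
    (hU : Uᴴ * U = 1) (hV : Vᴴ * V = 1) (X Y : Matrix (Fin a) (Fin b) ℂ) :
    Matrix.trace ((U * X * Vᴴ)ᴴ * (U * Y * Vᴴ)) = Matrix.trace (Xᴴ * Y) := by
  have h1 : (U * X * Vᴴ)ᴴ = V * Xᴴ * Uᴴ := by
    rw [Matrix.conjTranspose_mul, Matrix.conjTranspose_mul, Matrix.conjTranspose_conjTranspose,
      Matrix.mul_assoc]
  rw [h1]
  have h2 : V * Xᴴ * Uᴴ * (U * Y * Vᴴ) = V * (Xᴴ * Y) * Vᴴ := by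
    simp only [Matrix.mul_assoc]
    rw [← Matrix.mul_assoc Uᴴ U (Y * Vᴴ), hU, Matrix.one_mul]
  rw [h2, Matrix.trace_mul_comm (V * (Xᴴ * Y)) Vᴴ, ← Matrix.mul_assoc Vᴴ V (Xᴴ * Y), hV,
    Matrix.one_mul]

end HatLemmas

section InnerLemmas
variable {n1 n2 n3 : ℕ}

lemma tInner_nonneg (A : T3 n1 n2 n3 ℝ) : 0 ≤ tInner A A := by
  unfold tInner
  refine Finset.sum_nonneg fun i _ => Finset.sum_nonneg fun j _ => Finset.sum_nonneg fun k _ => ?_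
  exact mul_self_nonneg _

lemma tNorm_sq (A : T3 n1 n2 n3 ℝ) : tNorm A ^ 2 = tInner A A :=
  Real.sq_sqrt (tInner_nonneg A)

lemma tInner_flat (A B : T3 n1 n2 n3 ℝ) :
    tInner A B = ∑ p : Fin n1 × Fin n2 × Fin n3, A p.1 p.2.1 p.2.2 * B p.1 p.2.1 p.2.2 := by
  unfold tInner
  rw [Fintype.sum_prod_type]
  refine Finset.sum_congr rfl fun i _ => ?_
  rw [Fintype.sum_prod_type]

lemma tInner_sq_le (A B : T3 n1 n2 n3 ℝ) :
    (tInner A B) ^ 2 ≤ tInner A A * tInner B B := by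
  rw [tInner_flat, tInner_flat, tInner_flat]
  have h := Finset.sum_mul_sq_le_sq_mul_sq Finset.univ
    (fun p : Fin n1 × Fin n2 × Fin n3 => A p.1 p.2.1 p.2.2)
    (fun p : Fin n1 × Fin n2 × Fin n3 => B p.1 p.2.1 p.2.2)
  calc (∑ p : Fin n1 × Fin n2 × Fin n3, A p.1 p.2.1 p.2.2 * B p.1 p.2.1 p.2.2) ^ 2
      ≤ (∑ p : Fin n1 × Fin n2 × Fin n3, A p.1 p.2.1 p.2.2 ^ 2)
        * (∑ p : Fin n1 × Fin n2 × Fin n3, B p.1 p.2.1 p.2.2 ^ 2) := h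
    _ = _ := by
        congr 1 <;> exact Finset.sum_congr rfl fun p _ => (pow_two _)

lemma tInner_self_eq_zero {A : T3 n1 n2 n3 ℝ} (h : tInner A A = 0) : A = 0 := by
  rw [tInner_flat] at h
  have h2 := (Finset.sum_eq_zero_iff_of_nonneg
    (fun p _ => mul_self_nonneg (A p.1 p.2.1 p.2.2))).mp h
  funext i j k
  have := h2 (i, j, k) (Finset.mem_univ _)
  have : A i j k = 0 := by nlinarith [this]
  exact this

lemma tInner_expand (A B : T3 n1 n2 n3 ℝ) (θ : ℝ) :
    tInner (A - θ • B) (A - θ • B)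
      = tInner A A - 2 * θ * tInner A B + θ ^ 2 * tInner B B := by
  rw [tInner_flat, tInner_flat, tInner_flat, tInner_flat]
  have hpt : ∀ p : Fin n1 × Fin n2 × Fin n3,
      (A - θ • B) p.1 p.2.1 p.2.2 = A p.1 p.2.1 p.2.2 - θ * B p.1 p.2.1 p.2.2 :=
    fun _ => rfl
  simp only [hpt]
  rw [Finset.mul_sum, Finset.mul_sum, ← Finset.sum_sub_distrib, ← Finset.sum_add_distrib]
  refine Finset.sum_congr rfl fun p _ => ?_
  ring

lemma tInner_zero_right (A : T3 n1 n2 n3 ℝ) : tInner A 0 = 0 := by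
  unfold tInner
  simp

end InnerLemmas

lemma sum_range_min (a b : ℕ) :
    ∑ x ∈ Finset.range a, (if x < b then (1 : ℝ) else 0) = ((min a b : ℕ) : ℝ) := by
  induction a with
  | zero => simp
  | succ n ih =>
    rw [Finset.sum_range_succ, ih]
    by_cases h : n < b
    · rw [if_pos h]
      have : min (n + 1) b = min n b + 1 := by omega
      rw [this]
      push_cast
      ring
    · rw [if_neg h]
      have : min (n + 1) b = min n b := by omega
      rw [this, add_zero]

lemma diag_count (a b : ℕ) :
    ∑ i : Fin a, ∑ j : Fin b, (if (i : ℕ) = (j : ℕ) then (1 : ℝ) else 0)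
      = ((min a b : ℕ) : ℝ) := by
  have hrow : ∀ i : Fin a, (∑ j : Fin b, if (i : ℕ) = (j : ℕ) then (1 : ℝ) else 0)
      = if (i : ℕ) < b then 1 else 0 := by
    intro i
    by_cases h : (i : ℕ) < b
    · rw [if_pos h, Finset.sum_eq_single (⟨(i : ℕ), h⟩ : Fin b)]
      · simp
      · intro q _ hq
        rw [if_neg]
        intro hc
        exact hq (Fin.ext hc.symm)
      · simp
    · rw [if_neg h]
      apply Finset.sum_eq_zero
      intro q _
      rw [if_neg]
      intro hc
      exact h (hc ▸ q.isLt)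
  simp only [hrow]
  rw [Fin.sum_univ_eq_sum_range (fun x => if x < b then (1 : ℝ) else 0) a]
  exact sum_range_min a b

set_option maxHeartbeats 1600000

/-- for an orthogonal projection `P`, nonzero `R` with `P(R) = R`, and the
normalized leading rank-one tensor `M₁` of an ordered t-SVD of `R`,
`inf_θ ‖R − θ·P(M₁)‖_F² ≤ (1 − 1/min(n1,n2))·‖R‖_F²`. -/
theorem stmt_16 (n1 n2 n3 : ℕ) (hn1 : 0 < n1) (hn2 : 0 < n2)
    (P : T3 n1 n2 n3 ℝ → T3 n1 n2 n3 ℝ) (hlin : IsLinearMap ℝ P)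
    (hidem : ∀ X, P (P X) = P X)
    (hsym : ∀ X Y, tInner (P X) Y = tInner X (P Y))
    (R : T3 n1 n2 n3 ℝ) (hR0 : R ≠ 0) (hR : P R = R)
    (U : T3 n1 n1 n3 ℝ) (S : T3 n1 n2 n3 ℝ) (V : T3 n2 n2 n3 ℝ)
    (h : IsOrderedTSVD R U S V) :
    ⨅ θ : ℝ, tNorm (R - θ • P (leadM hn1 hn2 U S V)) ^ 2 ≤
      (1 - 1 / (min n1 n2 : ℝ)) * tNorm R ^ 2 := by
  classical
  -- dispose of n3 = 0
  rcases Nat.eq_zero_or_pos n3 with h30 | h3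
  · exfalso
    apply hR0
    subst h30
    funext i j k
    exact k.elim0
  have hn : n3 ≠ 0 := h3.ne'
  haveI : NeZero n3 := ⟨hn⟩
  obtain ⟨⟨hUo, hVo, hSd, hdecomp⟩, hord⟩ := h
  set z1 : Fin n1 := ⟨0, hn1⟩ with hz1
  set z2 : Fin n2 := ⟨0, hn2⟩ with hz2
  set M : T3 n1 n2 n3 ℝ := leadM hn1 hn2 U S V with hMdef
  set c : ℝ := tNorm (tube S z1 z2) with hcdef
  have hc0 : 0 ≤ c := Real.sqrt_nonneg _
  -- Fourier-domain matrices
  have hUk : ∀ k, (hatSlice U k)ᴴ * hatSlice U k = 1 := fun k => hat_orth_mat hUo.1 k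
  have hVk : ∀ k, (hatSlice V k)ᴴ * hatSlice V k = 1 := fun k => hat_orth_mat hVo.1 k
  have hRmat : ∀ k, hatSlice R k = hatSlice U k * hatSlice S k * (hatSlice V k)ᴴ := by
    intro k
    rw [hdecomp, hat_tprod_mat, hat_tprod_mat, hat_tT_mat]
  -- σ and its real value
  set σ : Fin n3 → ℂ := fun k => hatSlice S k z1 z2 with hσdef
  set σr : Fin n3 → ℝ := fun k => (hatSlice S k z1 z2).re with hσrdef
  have hσre : ∀ k, σ k = ((σr k : ℝ) : ℂ) := by
    intro k
    have him := (hord k).1 z1 z2 rfl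
    apply Complex.ext
    · simp [hσdef, hσrdef]
    · simp [hσdef, hσrdef, him.1]
  have hσr0 : ∀ k, 0 ≤ σr k := fun k => ((hord k).1 z1 z2 rfl).2
  -- the rank-one coefficient matrix
  set D : Fin n3 → Matrix (Fin n1) (Fin n2) ℂ :=
    fun k p q => if p = z1 ∧ q = z2 then σ k / (c : ℂ) else 0 with hDdef
  have hMmat : ∀ k, hatSlice M k = hatSlice U k * D k * (hatSlice V k)ᴴ := by
    intro k
    have hMeq : M = tprod (tprod (lat U z1)
        (fun _ _ m => S z1 z2 m / c)) (tT (lat V z2)) := rfl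
    rw [hMeq, hat_tprod_mat, hat_tprod_mat, hat_tT_mat]
    funext i j
    have hu : ∀ i : Fin n1, hatSlice (lat U z1) k i 0 = hatSlice U k i z1 := fun _ => rfl
    have hv : ∀ j : Fin n2, hatSlice (lat V z2) k j 0 = hatSlice V k j z2 := fun _ => rfl
    have ht' : hatSlice (fun _ _ m => S z1 z2 m / c : T3 1 1 n3 ℝ) k 0 0
        = σ k / (c : ℂ) := by
      rw [hat_apply, hσdef]
      show _ = hatSlice S k z1 z2 / (c : ℂ)
      rw [hat_apply, Finset.sum_div]
      refine Finset.sum_congr rfl fun m _ => ?_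
      push_cast
      ring
    -- LHS entry
    have hL : (hatSlice (lat U z1) k
          * hatSlice (fun _ _ m => S z1 z2 m / c : T3 1 1 n3 ℝ) k
          * (hatSlice (lat V z2) k)ᴴ) i j
        = hatSlice U k i z1 * (σ k / (c : ℂ)) * conj (hatSlice V k j z2) := by
      rw [Matrix.mul_apply]
      rw [Fin.sum_univ_one]
      rw [Matrix.mul_apply, Fin.sum_univ_one]
      rw [Matrix.conjTranspose_apply, hu, hv, ht', Complex.star_def]
    rw [hL]
    -- RHS entry
    have hUD : ∀ q, (hatSlice U k * D k) i q
        = if q = z2 then hatSlice U k i z1 * (σ k / (c : ℂ)) else 0 := by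
      intro q
      rw [Matrix.mul_apply]
      by_cases hq : q = z2
      · subst hq
        rw [if_pos rfl, Finset.sum_eq_single z1]
        · simp [hDdef]
        · intro p _ hp
          simp [hDdef, hp]
        · simp
      · rw [if_neg hq]
        apply Finset.sum_eq_zero
        intro p _
        simp [hDdef, hq]
    rw [Matrix.mul_apply]
    rw [Finset.sum_eq_single z2]
    · rw [hUD, if_pos rfl, Matrix.conjTranspose_apply, Complex.star_def]
    · intro q _ hq
      rw [hUD, if_neg hq, zero_mul]
    · simp
  -- Frobenius quantities in Fourier domain
  have hFRR : ∀ k, (∑ i, ∑ j, conj (hatSlice R k i j) * hatSlice R k i j)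
      = ∑ i, ∑ j, conj (hatSlice S k i j) * hatSlice S k i j := by
    intro k
    rw [← trace_conjT_mul, ← trace_conjT_mul, hRmat k,
      frob_unitary _ _ (hUk k) (hVk k)]
  have hFRM : ∀ k, (∑ i, ∑ j, conj (hatSlice R k i j) * hatSlice M k i j)
      = ∑ i, ∑ j, conj (hatSlice S k i j) * D k i j := by
    intro k
    rw [← trace_conjT_mul, ← trace_conjT_mul, hRmat k, hMmat k,
      frob_unitary _ _ (hUk k) (hVk k)]
  have hFMM : ∀ k, (∑ i, ∑ j, conj (hatSlice M k i j) * hatSlice M k i j)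
      = ∑ i, ∑ j, conj (D k i j) * D k i j := by
    intro k
    rw [← trace_conjT_mul, ← trace_conjT_mul, hMmat k,
      frob_unitary _ _ (hUk k) (hVk k)]
  -- collapse the single-entry sums with D
  have hSD : ∀ (G : Matrix (Fin n1) (Fin n2) ℂ) k,
      (∑ i, ∑ j, conj (G i j) * D k i j) = conj (G z1 z2) * (σ k / (c : ℂ)) := by
    intro G k
    rw [Finset.sum_eq_single z1]
    · rw [Finset.sum_eq_single z2]
      · simp [hDdef]
      · intro q _ hq
        simp [hDdef, hq]
      · simp
    · intro p _ hp
      apply Finset.sum_eq_zero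
      intro q _
      simp [hDdef, hp]
    · simp
  have hDD : ∀ k, (∑ i, ∑ j, conj (D k i j) * D k i j)
      = ((σr k ^ 2 / c ^ 2 : ℝ) : ℂ) := by
    intro k
    rw [hSD (D k) k]
    have hDz : D k z1 z2 = σ k / (c : ℂ) := by simp [hDdef]
    rw [hDz, hσre k]
    push_cast
    rw [map_div₀, Complex.conj_ofReal, Complex.conj_ofReal]
    ring
  -- Parseval identities, real form
  have hg : ∀ k, (∑ i, ∑ j, conj (hatSlice S k i j) * hatSlice S k i j)
      = ((∑ i, ∑ j, Complex.normSq (hatSlice S k i j) : ℝ) : ℂ) := by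
    intro k
    push_cast
    refine Finset.sum_congr rfl fun i _ => Finset.sum_congr rfl fun j _ => ?_
    rw [mul_comm, Complex.mul_conj]
  have h1 : (n3 : ℝ) * tInner R R
      = ∑ k, ∑ i, ∑ j, Complex.normSq (hatSlice S k i j) := by
    have hcx : ((∑ k, ∑ i, ∑ j, Complex.normSq (hatSlice S k i j) : ℝ) : ℂ)
        = (n3 : ℂ) * ((tInner R R : ℝ) : ℂ) := by
      calc ((∑ k, ∑ i, ∑ j, Complex.normSq (hatSlice S k i j) : ℝ) : ℂ)
          = ∑ k, ((∑ i, ∑ j, Complex.normSq (hatSlice S k i j) : ℝ) : ℂ) := by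
            push_cast; rfl
        _ = ∑ k, ∑ i, ∑ j, conj (hatSlice R k i j) * hatSlice R k i j :=
            Finset.sum_congr rfl fun k _ => ((hFRR k).trans (hg k)).symm
        _ = (n3 : ℂ) * ((tInner R R : ℝ) : ℂ) := parseval R R
    exact_mod_cast hcx.symm
  -- tube parseval
  have h2 : (n3 : ℝ) * tInner (tube S z1 z2) (tube S z1 z2) = ∑ k, σr k ^ 2 := by
    have hcx : ((∑ k, σr k ^ 2 : ℝ) : ℂ)
        = (((n3 : ℝ) * tInner (tube S z1 z2) (tube S z1 z2) : ℝ) : ℂ) := by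
      push_cast
      rw [← parseval (tube S z1 z2) (tube S z1 z2)]
      refine (Finset.sum_congr rfl fun k _ => ?_).symm
      rw [Fin.sum_univ_one, Fin.sum_univ_one]
      have htube : hatSlice (tube S z1 z2) k 0 0 = σ k := rfl
      rw [htube, hσre k, Complex.conj_ofReal]
      ring
    exact (Complex.ofReal_inj.mp hcx).symm
  have hcsq : c ^ 2 = tInner (tube S z1 z2) (tube S z1 z2) := tNorm_sq _
  -- min bound
  have h5 : ∀ k, (∑ i, ∑ j, Complex.normSq (hatSlice S k i j))
      ≤ ((min n1 n2 : ℕ) : ℝ) * σr k ^ 2 := by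
    intro k
    have hb : ∀ (i : Fin n1) (j : Fin n2), Complex.normSq (hatSlice S k i j)
        ≤ (if (i : ℕ) = (j : ℕ) then (1 : ℝ) else 0) * σr k ^ 2 := by
      intro i j
      by_cases hij : (i : ℕ) = (j : ℕ)
      · rw [if_pos hij, one_mul]
        have him := (hord k).1 i j hij
        have hle := (hord k).2 z1 i z2 j rfl hij (Nat.zero_le _)
        rw [Complex.normSq_apply, him.1]
        have h0 := him.2
        have : σr k = (hatSlice S k z1 z2).re := rfl
        nlinarith [h0, hle]
      · rw [if_neg hij, zero_mul]
        have hz : hatSlice S k i j = 0 := by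
          rw [hat_apply]
          apply Finset.sum_eq_zero
          intro m _
          rw [hSd i j m hij]
          simp
        rw [hz]
        simp
    calc (∑ i, ∑ j, Complex.normSq (hatSlice S k i j))
        ≤ ∑ i : Fin n1, ∑ j : Fin n2,
            (if (i : ℕ) = (j : ℕ) then (1 : ℝ) else 0) * σr k ^ 2 := by
          refine Finset.sum_le_sum fun i _ => Finset.sum_le_sum fun j _ => hb i j
      _ = ((min n1 n2 : ℕ) : ℝ) * σr k ^ 2 := by
          simp only [← Finset.sum_mul]
          rw [diag_count n1 n2]
  -- main real inequality r ≤ min * c^2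
  set r : ℝ := tInner R R with hrdef
  have hr0 : 0 ≤ r := tInner_nonneg R
  set mn : ℝ := ((min n1 n2 : ℕ) : ℝ) with hmndef
  have hmn1 : 1 ≤ mn := by
    rw [hmndef]
    have : 1 ≤ min n1 n2 := by omega
    exact_mod_cast this
  have hrmn : r ≤ mn * c ^ 2 := by
    have hA : (n3 : ℝ) * r ≤ mn * ((n3 : ℝ) * c ^ 2) := by
      rw [h1, hcsq, h2, Finset.mul_sum]
      exact Finset.sum_le_sum fun k _ => h5 k
    have hn3pos : (0 : ℝ) < n3 := by exact_mod_cast h3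
    nlinarith [hA, hn3pos]
  -- c > 0
  have hcpos : 0 < c := by
    rcases lt_or_eq_of_le hc0 with h | h
    · exact h
    · exfalso
      apply hR0
      apply tInner_self_eq_zero
      have hc' : c = 0 := h.symm
      have hrle : r ≤ 0 := by
        have h' := hrmn
        rw [hc'] at h'
        simpa using h'
      have : r = 0 := le_antisymm hrle hr0
      rw [hrdef] at this
      exact this
  have hcne : (c : ℂ) ≠ 0 := by
    simp only [ne_eq, Complex.ofReal_eq_zero]
    exact hcpos.ne'
  -- sum of σr^2 equals n3 c^2
  have ht2 : ∑ k, σr k ^ 2 = (n3 : ℝ) * c ^ 2 := by rw [hcsq, h2]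
  have hn3 : (n3 : ℝ) ≠ 0 := by exact_mod_cast hn
  -- tInner R M = c
  have hRM : tInner R M = c := by
    have hpar := parseval R M
    rw [Finset.sum_congr rfl fun k _ => (hFRM k).trans (hSD (hatSlice S k) k)] at hpar
    have hterm : ∀ k : Fin n3, conj (hatSlice S k z1 z2) * (σ k / (c : ℂ))
        = ((σr k ^ 2 / c : ℝ) : ℂ) := by
      intro k
      have hs : hatSlice S k z1 z2 = σ k := rfl
      rw [hs, hσre k, Complex.conj_ofReal]
      push_cast
      ring
    rw [Finset.sum_congr rfl fun k _ => hterm k] at hpar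
    have hre : ∑ k, σr k ^ 2 / c = (n3 : ℝ) * tInner R M := by exact_mod_cast hpar
    rw [← Finset.sum_div, ht2] at hre
    have heq : (n3 : ℝ) * tInner R M = (n3 : ℝ) * c := by
      rw [← hre]
      field_simp
    exact mul_left_cancel₀ hn3 heq
  -- tInner M M = 1
  have hMM1 : tInner M M = 1 := by
    have hpar := parseval M M
    rw [Finset.sum_congr rfl fun k _ => (hFMM k).trans (hDD k)] at hpar
    have hre : ∑ k, σr k ^ 2 / c ^ 2 = (n3 : ℝ) * tInner M M := by exact_mod_cast hpar
    rw [← Finset.sum_div, ht2] at hre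
    have heq : (n3 : ℝ) * tInner M M = (n3 : ℝ) * 1 := by
      rw [← hre]
      field_simp
    exact (mul_left_cancel₀ hn3 heq).trans (by ring)
  -- projection facts
  set N : T3 n1 n2 n3 ℝ := P M with hNdef
  have haN : tInner R N = c := by
    rw [hNdef, ← hsym R M, hR, hRM]
  set nn : ℝ := tInner N N with hnndef
  have hnn0 : 0 ≤ nn := tInner_nonneg N
  have hnnM : nn = tInner M N := by
    rw [hnndef, hNdef, hsym M (P M), hidem M]
  have hnnle1 : nn ≤ 1 := by
    have hcs := tInner_sq_le M N
    rw [← hnnM, hMM1, one_mul] at hcs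
    nlinarith [hcs, hnn0]
  have hnnpos : 0 < nn := by
    rcases lt_or_eq_of_le hnn0 with h | h
    · exact h
    · exfalso
      have hN0 : N = 0 := tInner_self_eq_zero (by rw [← hnndef, ← h])
      rw [hN0, tInner_zero_right] at haN
      exact hcpos.ne' haN.symm
  clear_value z1 z2 M c σ σr D r mn N nn
  -- choose θ := c / nn
  have hbdd : BddBelow (Set.range fun θ : ℝ => tNorm (R - θ • N) ^ 2) := by
    refine ⟨0, ?_⟩
    rintro x ⟨θ, rfl⟩
    positivity
  have hval : tNorm (R - (c / nn) • N) ^ 2 = r - c ^ 2 / nn := by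
    rw [tNorm_sq, tInner_expand R N (c / nn), haN, ← hnndef, hrdef]
    field_simp
    ring
  have hgoal1 : r - c ^ 2 / nn ≤ r - c ^ 2 := by
    have : c ^ 2 ≤ c ^ 2 / nn := by
      rw [le_div_iff₀ hnnpos]
      nlinarith [hnnle1, sq_nonneg c]
    linarith
  have hgoal2 : r - c ^ 2 ≤ (1 - 1 / mn) * r := by
    have hmnpos : 0 < mn := lt_of_lt_of_le one_pos hmn1
    have : r / mn ≤ c ^ 2 := by
      rw [div_le_iff₀ hmnpos]
      nlinarith [hrmn]
    have hexp : (1 - 1 / mn) * r = r - r / mn := by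
      field_simp
    rw [hexp]
    linarith
  have hcast : (1 - 1 / (min n1 n2 : ℝ)) * tNorm R ^ 2 = (1 - 1 / mn) * r := by
    rw [tNorm_sq, hrdef, hmndef]
    norm_cast
  refine ciInf_le_of_le hbdd (c / nn) ?_
  rw [hval, hcast]
  linarith
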